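/- Let E₂ = e₁⊗e₂ - e₂⊗e₁ + e₁⊗e₁ = (1,1,-1,0)ᵀ ∈ ℂ⁴. For U ∈ GL(2,ℂ) and k ∈ ℂ∖{0}, the equation (U⁻¹ ⊗ U⁻¹)E₂ = k⁻¹E₂ holds if and only if U = [[m,x],[0,m]] for some m ∈ ℂ∖{0} and x ∈ ℂ, in which case k = m². -/

import Mathlib

open Matrix Complex

noncomputable section

/-- Kronecker product of `Fin`-indexed matrices, with the standard (lexicographic)
Kronecker ordering of indices. -/
def kron {m n p q : ℕ} (A : Matrix (Fin m) (Fin n) ℂ) (B : Matrix (Fin p) (Fin q) ℂ) :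
    Matrix (Fin (m * p)) (Fin (n * q)) ℂ :=
  Matrix.of fun i j => A i.divNat j.divNat * B i.modNat j.modNat

/-- E₂ = e₁⊗e₂ - e₂⊗e₁ + e₁⊗e₁ = (1,1,-1,0)ᵀ as a column vector. -/
def E2col : Matrix (Fin 4) (Fin 1) ℂ := !![1; 1; -1; 0]

lemma d0 : Fin.divNat (0 : Fin (2*2)) = 0 := rfl
lemma d1 : Fin.divNat (1 : Fin (2*2)) = 0 := rfl
lemma d2 : Fin.divNat (2 : Fin (2*2)) = 1 := rfl
lemma d3 : Fin.divNat (3 : Fin (2*2)) = 1 := rfl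
lemma m0 : Fin.modNat (0 : Fin (2*2)) = 0 := rfl
lemma m1 : Fin.modNat (1 : Fin (2*2)) = 1 := rfl
lemma m2 : Fin.modNat (2 : Fin (2*2)) = 0 := rfl
lemma m3 : Fin.modNat (3 : Fin (2*2)) = 1 := rfl

lemma kron_mul_E2 (V : Matrix (Fin 2) (Fin 2) ℂ) :
    kron V V * E2col =
      !![V 0 0 ^ 2;
         V 0 0 * V 1 0 + V 0 0 * V 1 1 - V 0 1 * V 1 0;
         V 1 0 * V 0 0 + V 1 0 * V 0 1 - V 1 1 * V 0 0;
         V 1 0 ^ 2] := by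
  ext i j
  fin_cases i <;> fin_cases j <;>
    simp [kron, E2col, Matrix.mul_apply, Fin.sum_univ_four, d0, d1, d2, d3, m0, m1, m2, m3] <;>
    ring

/-- For invertible `U` and `k ≠ 0`, `(U⁻¹ ⊗ U⁻¹)E₂ = k⁻¹E₂` holds iff
`U = [[m,x],[0,m]]` with `m ≠ 0`, in which case `k = m²`. -/
theorem E2_stabilizer (U : Matrix (Fin 2) (Fin 2) ℂ) (hU : IsUnit U) (k : ℂ) (hk : k ≠ 0) :
    kron U⁻¹ U⁻¹ * E2col = k⁻¹ • E2col ↔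
      ∃ m x : ℂ, m ≠ 0 ∧ U = !![m, x; 0, m] ∧ k = m ^ 2 := by
  rw [kron_mul_E2]
  constructor
  · intro h
    set a := U⁻¹ 0 0 with ha
    set b := U⁻¹ 0 1 with hb
    set c := U⁻¹ 1 0 with hc
    set d := U⁻¹ 1 1 with hd
    have h0 := congrFun (congrFun h 0) 0
    have h1 := congrFun (congrFun h 1) 0
    have h3 := congrFun (congrFun h 3) 0
    simp [E2col] at h0 h1 h3
    have ha0 : a ≠ 0 := by
      intro h'
      rw [h'] at h0
      simp at h0
      exact hk h0.symm
    have had : d = a := mul_left_cancel₀ ha0 (by linear_combination h1 - h0 + (b - a) * h3)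
    refine ⟨a⁻¹, -b * (a⁻¹ * a⁻¹), inv_ne_zero ha0, ?_, ?_⟩
    · have hVinv : U⁻¹ * !![a⁻¹, -b * (a⁻¹ * a⁻¹); 0, a⁻¹] = 1 := by
        have hV : U⁻¹ = !![a, b; 0, a] := by
          ext i j
          fin_cases i <;> fin_cases j <;> simp
          · rfl
          · rfl
          · exact h3
          · exact had
        rw [hV]
        ext i j
        fin_cases i <;> fin_cases j <;>
          simp [Matrix.mul_apply, Fin.sum_univ_two] <;> field_simp <;> ring
      have := Matrix.inv_eq_right_inv hVinv
      rwa [Matrix.nonsing_inv_nonsing_inv U ((Matrix.isUnit_iff_isUnit_det U).mp hU)] at this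
    · rw [inv_pow, h0, inv_inv]
  · rintro ⟨m, x, hm, hUeq, hkeq⟩
    have hinv : U⁻¹ = !![m⁻¹, -x * (m⁻¹ * m⁻¹); 0, m⁻¹] := by
      apply Matrix.inv_eq_right_inv
      rw [hUeq]
      ext i j
      fin_cases i <;> fin_cases j <;>
        simp [Matrix.mul_apply, Fin.sum_univ_two] <;> field_simp <;> ring
    rw [hinv, hkeq]
    ext i j
    fin_cases i <;> fin_cases j <;>
      simp [E2col] <;> field_simp <;> ring
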